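/- Let ε ∈ [0,1) and suppose there exists a randomized protocol for the combinatorial Slepian–Wolf scheme with parameters (n, T, ε) whose messages have lengths m_A and m_B. Then 2^{m_A+m_B} ≥ (1−ε)·2^n·V(n,T), 2^{m_A} ≥ (1−ε)·V(n,T), and 2^{m_B} ≥ (1−ε)·V(n,T). -/

import Mathlib

/-- `V n T` is the volume of the Hamming ball of radius `T` in `{0,1}^n`. -/
def V (n T : ℕ) : ℕ := ∑ i ∈ Finset.range (T + 1), n.choose i

/-- A triple of maps forms a randomized protocol for the combinatorial
Slepian–Wolf scheme with parameters `(n, T, ε)`: for each pair of inputs at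
Hamming distance at most `T`, decoding succeeds with probability greater than
`1 − ε` over the three independent uniform random strings `r_A, r_B, r_C`. -/
def RandProtocol (n T R mA mB : ℕ)
    (CodeA : (Fin n → Bool) → (Fin R → Bool) → (Fin mA → Bool))
    (CodeB : (Fin n → Bool) → (Fin R → Bool) → (Fin mB → Bool))
    (Decode : (Fin mA → Bool) → (Fin mB → Bool) → (Fin R → Bool) →
      (Fin n → Bool) × (Fin n → Bool)) (ε : ℝ) : Prop :=
  ∀ x y : Fin n → Bool, hammingDist x y ≤ T →
    ((Finset.univ.filter
        (fun r : (Fin R → Bool) × (Fin R → Bool) × (Fin R → Bool) =>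
          Decode (CodeA x r.1) (CodeB y r.2.1) r.2.2 = (x, y))).card : ℝ)
      > (1 - ε) * 2 ^ (3 * R)

open Finset



/-- Hamming ball volume. -/
lemma card_ball (n T : ℕ) (x : Fin n → Bool) :
    (Finset.univ.filter (fun y : Fin n → Bool => hammingDist x y ≤ T)).card
      = ∑ i ∈ Finset.range (T + 1), n.choose i := by
  -- step 1: translate to weight
  have h1 : (Finset.univ.filter (fun y : Fin n → Bool => hammingDist x y ≤ T)).card
      = (Finset.univ.filter (fun z : Fin n → Bool =>
          (Finset.univ.filter (fun j => z j = true)).card ≤ T)).card := by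
    apply Finset.card_nbij' (i := fun y => fun j => xor (x j) (y j))
      (j := fun z => fun j => xor (x j) (z j))
    · intro y hy
      simp only [Finset.mem_coe, mem_filter, mem_univ, true_and] at hy ⊢
      convert hy using 2
      unfold hammingDist
      congr 1
      apply Finset.filter_congr
      intro j _
      constructor
      · intro h; cases hx : x j <;> cases hyj : y j <;> simp_all
      · intro h; cases hx : x j <;> cases hyj : y j <;> simp_all
    · intro z hz
      simp only [Finset.mem_coe, mem_filter, mem_univ, true_and] at hz ⊢
      unfold hammingDist
      convert hz using 2
      apply Finset.filter_congr
      intro j _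
      cases hx : x j <;> cases hzj : z j <;> simp_all
    · intro y _; funext j; cases hx : x j <;> cases hyj : y j <;> simp_all
    · intro z _; funext j; cases hx : x j <;> cases hzj : z j <;> simp_all
  rw [h1]
  -- step 2: weight set partitioned by exact weight
  have h2 : (Finset.univ.filter (fun z : Fin n → Bool =>
        (Finset.univ.filter (fun j => z j = true)).card ≤ T))
      = (Finset.range (T+1)).biUnion (fun i => Finset.univ.filter (fun z : Fin n → Bool =>
        (Finset.univ.filter (fun j => z j = true)).card = i)) := by
    ext z
    simp [Nat.lt_succ_iff]
  rw [h2, Finset.card_biUnion]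
  · apply Finset.sum_congr rfl
    intro i _
    have : (Finset.univ.filter (fun z : Fin n → Bool =>
        (Finset.univ.filter (fun j => z j = true)).card = i)).card
        = (Finset.powersetCard i (Finset.univ : Finset (Fin n))).card := by
      apply Finset.card_nbij' (i := fun z => Finset.univ.filter (fun j => z j = true))
        (j := fun s => fun j => decide (j ∈ s))
      · intro z hz
        simp only [Finset.mem_coe, mem_filter, mem_univ, true_and] at hz
        simp [Finset.mem_powersetCard, hz]
      · intro s hs
        simp only [Finset.mem_coe, Finset.mem_powersetCard] at hs
        simp only [Finset.mem_coe, mem_filter, mem_univ, true_and]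
        rw [← hs.2]
        congr 1
        ext j
        simp
      · intro z _; funext j; simp
      · intro s _; ext j; simp
    rw [this, Finset.card_powersetCard, Finset.card_univ, Fintype.card_fin]
  · intro i _ j _ hij
    simp only [Finset.disjoint_left, mem_filter]
    rintro z ⟨_, hz⟩ ⟨_, hz'⟩
    exact hij (hz ▸ hz')

/-- Double counting lemma. -/
lemma count_le {α β γ : Type*} [Fintype β] [Fintype γ] [DecidableEq α] [DecidableEq γ]
    (S : Finset α) (P : α → β → Prop) [∀ a, DecidablePred (P a)]
    (f : α → β → γ)
    (hinj : ∀ b a1 a2, a1 ∈ S → a2 ∈ S → P a1 b → P a2 b → f a1 b = f a2 b → a1 = a2)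
    (c : ℝ)
    (hc : ∀ a ∈ S, c < ((Finset.univ.filter (P a)).card : ℝ)) :
    c * S.card ≤ (Fintype.card γ : ℝ) * (Fintype.card β : ℝ) := by
  have h1 : c * S.card ≤ ∑ a ∈ S, ((Finset.univ.filter (P a)).card : ℝ) := by
    calc c * S.card = ∑ _a ∈ S, c := by rw [Finset.sum_const, nsmul_eq_mul, mul_comm]
    _ ≤ _ := Finset.sum_le_sum fun a ha => (hc a ha).le
  have h2 : ∑ a ∈ S, (Finset.univ.filter (P a)).card ≤ Fintype.card γ * Fintype.card β := by
    have hswap : ∑ a ∈ S, (Finset.univ.filter (P a)).card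
        = ∑ b : β, (S.filter (fun a => P a b)).card := by
      simp only [Finset.card_filter]
      exact Finset.sum_comm
    rw [hswap]
    calc ∑ b : β, (S.filter (fun a => P a b)).card ≤ ∑ _b : β, Fintype.card γ := by
          apply Finset.sum_le_sum
          intro b _
          have himg : ((S.filter (fun a => P a b)).image (fun a => f a b)).card
              = (S.filter (fun a => P a b)).card := by
            apply Finset.card_image_of_injOn
            intro a1 ha1 a2 ha2 he
            simp only [Finset.coe_filter, Set.mem_setOf_eq] at ha1 ha2
            exact hinj b a1 a2 ha1.1 ha2.1 ha1.2 ha2.2 he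
          rw [← himg]
          exact (Finset.card_le_univ _).trans_eq Finset.card_univ
        _ = Fintype.card γ * Fintype.card β := by
          rw [Finset.sum_const, smul_eq_mul, Finset.card_univ, mul_comm]
  calc c * S.card ≤ ∑ a ∈ S, ((Finset.univ.filter (P a)).card : ℝ) := h1
  _ ≤ (Fintype.card γ : ℝ) * (Fintype.card β : ℝ) := by exact_mod_cast Nat.cast_le.mpr h2

lemma card_ball' (n T : ℕ) (x : Fin n → Bool) :
    (Finset.univ.filter (fun y : Fin n → Bool => hammingDist x y ≤ T)).card = V n T :=
  card_ball n T x


theorem stmt8_aux (ε : ℝ) (hε0 : 0 ≤ ε) (hε1 : ε < 1)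
    {n T R mA mB : ℕ}
    (CodeA : (Fin n → Bool) → (Fin R → Bool) → (Fin mA → Bool))
    (CodeB : (Fin n → Bool) → (Fin R → Bool) → (Fin mB → Bool))
    (Decode : (Fin mA → Bool) → (Fin mB → Bool) → (Fin R → Bool) →
      (Fin n → Bool) × (Fin n → Bool))
    (hprot : ∀ x y : Fin n → Bool, hammingDist x y ≤ T →
    ((Finset.univ.filter
        (fun r : (Fin R → Bool) × (Fin R → Bool) × (Fin R → Bool) =>
          Decode (CodeA x r.1) (CodeB y r.2.1) r.2.2 = (x, y))).card : ℝ)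
      > (1 - ε) * 2 ^ (3 * R)) :
    (2 : ℝ) ^ (mA + mB) ≥ (1 - ε) * 2 ^ n * V n T ∧
    (2 : ℝ) ^ mA ≥ (1 - ε) * V n T ∧
    (2 : ℝ) ^ mB ≥ (1 - ε) * V n T := by
  have hB : ((Fintype.card ((Fin R → Bool) × (Fin R → Bool) × (Fin R → Bool))) : ℝ)
      = 2 ^ (3 * R) := by
    simp only [Fintype.card_prod, Fintype.card_fun, Fintype.card_bool, Fintype.card_fin]
    push_cast
    ring
  have hp3 : (0 : ℝ) < 2 ^ (3 * R) := by positivity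
  refine ⟨?_, ?_, ?_⟩
  · -- pairs
    set S : Finset ((Fin n → Bool) × (Fin n → Bool)) :=
      Finset.univ.filter (fun p => hammingDist p.1 p.2 ≤ T) with hS
    have hcard : S.card = 2 ^ n * V n T := by
      have : S.card = ∑ x : Fin n → Bool,
          (Finset.univ.filter (fun y : Fin n → Bool => hammingDist x y ≤ T)).card := by
        simp only [hS, Finset.card_filter, Fintype.sum_prod_type]
      rw [this]
      simp only [card_ball']
      rw [Finset.sum_const, smul_eq_mul, Finset.card_univ, Fintype.card_fun,
        Fintype.card_bool, Fintype.card_fin]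
    have key := count_le (S := S)
      (P := fun p (r : (Fin R → Bool) × (Fin R → Bool) × (Fin R → Bool)) =>
        Decode (CodeA p.1 r.1) (CodeB p.2 r.2.1) r.2.2 = (p.1, p.2))
      (f := fun p r => (CodeA p.1 r.1, CodeB p.2 r.2.1))
      (hinj := by
        intro b a1 a2 h1 h2 hp1 hp2 he
        have h1' := hp1
        rw [show CodeA a1.1 b.1 = CodeA a2.1 b.1 from congrArg Prod.fst he,
          show CodeB a1.2 b.2.1 = CodeB a2.2 b.2.1 from congrArg Prod.snd he] at h1'
        have := h1'.symm.trans hp2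
        have h3 : a1.1 = a2.1 := congrArg Prod.fst this
        have h4 : a1.2 = a2.2 := congrArg Prod.snd this
        exact Prod.ext h3 h4)
      (c := (1 - ε) * 2 ^ (3 * R))
      (hc := by
        intro p hp
        simp only [hS, mem_filter, mem_univ, true_and] at hp
        exact hprot p.1 p.2 hp)
    rw [hB, hcard] at key
    have hγ : ((Fintype.card ((Fin mA → Bool) × (Fin mB → Bool))) : ℝ) = 2 ^ (mA + mB) := by
      simp only [Fintype.card_prod, Fintype.card_fun, Fintype.card_bool, Fintype.card_fin]
      push_cast
      ring
    rw [hγ] at key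
    push_cast at key
    nlinarith [key, hp3]
  · set y0 : Fin n → Bool := fun _ => false
    set S : Finset (Fin n → Bool) :=
      Finset.univ.filter (fun x => hammingDist x y0 ≤ T) with hS
    have hcard : S.card = V n T := by
      rw [hS, ← card_ball' n T y0]
      congr 1
      apply Finset.filter_congr
      intro x _
      rw [hammingDist_comm]
    have key := count_le (S := S)
      (P := fun x (r : (Fin R → Bool) × (Fin R → Bool) × (Fin R → Bool)) =>
        Decode (CodeA x r.1) (CodeB y0 r.2.1) r.2.2 = (x, y0))
      (f := fun x (r : (Fin R → Bool) × (Fin R → Bool) × (Fin R → Bool)) => CodeA x r.1)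
      (hinj := by
        intro b a1 a2 h1 h2 hp1 hp2 he
        have he' : CodeA a1 b.1 = CodeA a2 b.1 := he
        rw [he'] at hp1
        exact congrArg Prod.fst (hp1.symm.trans hp2))
      (c := (1 - ε) * 2 ^ (3 * R))
      (hc := by
        intro x hx
        simp only [hS, mem_filter, mem_univ, true_and] at hx
        exact hprot x y0 hx)
    rw [hB, hcard] at key
    have hγ : ((Fintype.card (Fin mA → Bool)) : ℝ) = 2 ^ mA := by
      simp [Fintype.card_fun]
    rw [hγ] at key
    nlinarith [key, hp3]
  · set x0 : Fin n → Bool := fun _ => false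
    set S : Finset (Fin n → Bool) :=
      Finset.univ.filter (fun y => hammingDist x0 y ≤ T) with hS
    have hcard : S.card = V n T := card_ball' n T x0
    have key := count_le (S := S)
      (P := fun y (r : (Fin R → Bool) × (Fin R → Bool) × (Fin R → Bool)) =>
        Decode (CodeA x0 r.1) (CodeB y r.2.1) r.2.2 = (x0, y))
      (f := fun y (r : (Fin R → Bool) × (Fin R → Bool) × (Fin R → Bool)) => CodeB y r.2.1)
      (hinj := by
        intro b a1 a2 h1 h2 hp1 hp2 he
        have he' : CodeB a1 b.2.1 = CodeB a2 b.2.1 := he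
        rw [he'] at hp1
        exact congrArg Prod.snd (hp1.symm.trans hp2))
      (c := (1 - ε) * 2 ^ (3 * R))
      (hc := by
        intro y hy
        simp only [hS, mem_filter, mem_univ, true_and] at hy
        exact hprot x0 y hy)
    rw [hB, hcard] at key
    have hγ : ((Fintype.card (Fin mB → Bool)) : ℝ) = 2 ^ mB := by
      simp [Fintype.card_fun]
    rw [hγ] at key
    nlinarith [key, hp3]

theorem stmt8 (ε : ℝ) (hε0 : 0 ≤ ε) (hε1 : ε < 1)
    {n T R mA mB : ℕ}
    (CodeA : (Fin n → Bool) → (Fin R → Bool) → (Fin mA → Bool))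
    (CodeB : (Fin n → Bool) → (Fin R → Bool) → (Fin mB → Bool))
    (Decode : (Fin mA → Bool) → (Fin mB → Bool) → (Fin R → Bool) →
      (Fin n → Bool) × (Fin n → Bool))
    (hprot : RandProtocol n T R mA mB CodeA CodeB Decode ε) :
    (2 : ℝ) ^ (mA + mB) ≥ (1 - ε) * 2 ^ n * V n T ∧
    (2 : ℝ) ^ mA ≥ (1 - ε) * V n T ∧
    (2 : ℝ) ^ mB ≥ (1 - ε) * V n T :=
  stmt8_aux ε hε0 hε1 CodeA CodeB Decode hprot
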